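/- Let −1 < z < 0, and r_1, r_2, u, v > 0 with r_1 < u. Then ∫_0^1 (uw−r_1)_+^{−z−1}/Γ(−z) · (vw+r_2)^{z−1}/Γ(z+1) dw = (u−r_1)^{−z}/Γ(−z+1) · (v+r_2)^z/Γ(z+1) · 1/(r_1 v + r_2 u). -/

import Mathlib

open MeasureTheory

theorem hook_contraction_integral (z r₁ r₂ u v : ℝ)
    (hz₁ : -1 < z) (hz₂ : z < 0)
    (hr₁ : 0 < r₁) (hr₂ : 0 < r₂) (hu : 0 < u) (hv : 0 < v) (h : r₁ < u) :
    ∫ w in Set.Ioo (0:ℝ) 1,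
        ((if 0 < u * w - r₁ then (u * w - r₁) ^ (-z - 1) else 0) / Real.Gamma (-z)) *
          ((v * w + r₂) ^ (z - 1) / Real.Gamma (z + 1)) =
      ((u - r₁) ^ (-z) / Real.Gamma (-z + 1)) * ((v + r₂) ^ z / Real.Gamma (z + 1)) *
        (1 / (r₁ * v + r₂ * u)) := by
  set a : ℝ := r₁ / u with ha
  have ha0 : 0 < a := div_pos hr₁ hu
  have ha1 : a < 1 := (div_lt_one hu).2 h
  have hzne : z ≠ 0 := ne_of_lt hz₂
  have hnz : (0:ℝ) < -z := by linarith
  have hz1 : (0:ℝ) < z + 1 := by linarith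
  have hG1 : 0 < Real.Gamma (-z) := Real.Gamma_pos_of_pos hnz
  have hG2 : 0 < Real.Gamma (z + 1) := Real.Gamma_pos_of_pos hz1
  have hden : 0 < r₁ * v + r₂ * u := by positivity
  set F : ℝ → ℝ := fun w =>
    ((if 0 < u * w - r₁ then (u * w - r₁) ^ (-z - 1) else 0) / Real.Gamma (-z)) *
      ((v * w + r₂) ^ (z - 1) / Real.Gamma (z + 1)) with hF
  set g : ℝ → ℝ := fun w =>
    (u * w - r₁) ^ (-z - 1) * (v * w + r₂) ^ (z - 1) *
      (1 / (Real.Gamma (-z) * Real.Gamma (z + 1))) with hg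
  have hua : u * a - r₁ = 0 := by rw [ha]; field_simp; ring
  -- F = 0 on [0, a]
  have hF0 : Set.EqOn F 0 (Set.uIcc 0 a) := by
    intro w hw
    rw [Set.uIcc_of_le ha0.le] at hw
    have : u * w ≤ r₁ := by
      have := hw.2
      calc u * w ≤ u * a := by nlinarith
        _ = r₁ := by rw [ha]; field_simp
    have hne : ¬ 0 < u * w - r₁ := by linarith
    simp only [hF, Pi.zero_apply, if_neg hne]
    ring
  -- F = g on [a, 1]
  have hFg : Set.EqOn F g (Set.uIcc a 1) := by
    intro w hw
    rw [Set.uIcc_of_le ha1.le] at hw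
    rcases eq_or_lt_of_le hw.1 with heq | hlt
    · have h0 : u * w - r₁ = 0 := by rw [← heq]; exact hua
      simp [hF, hg, h0, Real.zero_rpow (by linarith : -z - 1 ≠ 0)]
    · have hp : 0 < u * w - r₁ := by
        have : u * a < u * w := by exact (mul_lt_mul_iff_right₀ hu).2 hlt
        linarith [hua]
      simp only [hF, hg, if_pos hp]
      ring
  -- interval integrability of g on [a,1]
  have hint1 : IntervalIntegrable (fun w => (u * w - r₁) ^ (-z - 1)) volume a 1 := by
    have h0 : IntervalIntegrable (fun x : ℝ => x ^ (-z - 1)) volume 0 (u - r₁) :=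
      intervalIntegral.intervalIntegrable_rpow' (by linarith)
    have h1 := (h0.comp_sub_right r₁).comp_mul_left (c := u)
    simp only [zero_add, sub_add_cancel] at h1
    have e1 : r₁ / u = a := rfl
    have e2 : u / u = (1:ℝ) := div_self hu.ne'
    rwa [e1, e2] at h1
  have hcont2 : ContinuousOn (fun w => (v * w + r₂) ^ (z - 1)) (Set.uIcc a 1) := by
    intro x hx
    rw [Set.uIcc_of_le ha1.le] at hx
    have hq : 0 < v * x + r₂ := by nlinarith [hx.1]
    exact ContinuousAt.continuousWithinAt
      (((by fun_prop : ContinuousAt (fun w : ℝ => v * w + r₂) x)).rpow_const (Or.inl hq.ne'))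
  have hintg : IntervalIntegrable g volume a 1 :=
    (hint1.mul_continuousOn hcont2).mul_const _
  have hintF1 : IntervalIntegrable F volume a 1 := by
    rw [intervalIntegrable_iff_integrableOn_Ioc_of_le ha1.le]
    refine (hintg.1.congr_fun ?_ measurableSet_Ioc)
    · intro x hx
      exact (hFg (by rw [Set.uIcc_of_le ha1.le]; exact Set.mem_Icc_of_Ioc hx)).symm
  have hintF0 : IntervalIntegrable F volume 0 a := by
    rw [intervalIntegrable_iff_integrableOn_Ioc_of_le ha0.le]
    refine (integrableOn_zero.congr_fun ?_ measurableSet_Ioc : IntegrableOn F _ _)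
    intro x hx
    exact (hF0 (by rw [Set.uIcc_of_le ha0.le]; exact Set.mem_Icc_of_Ioc hx)).symm
  -- FTC on [a,1]
  set c : ℝ := 1 / (-z * (r₁ * v + r₂ * u) * (Real.Gamma (-z) * Real.Gamma (z + 1))) with hc
  set H : ℝ → ℝ := fun w => (u * w - r₁) ^ (-z) * (v * w + r₂) ^ z * c with hH
  have hcontH : ContinuousOn H (Set.Icc a 1) := by
    have c1 : Continuous fun w : ℝ => (u * w - r₁) ^ (-z) := by
      apply continuous_iff_continuousAt.2
      intro x
      exact ((by fun_prop : ContinuousAt (fun w : ℝ => u * w - r₁) x)).rpow_const (Or.inr hnz.le)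
    have c2 : ContinuousOn (fun w => (v * w + r₂) ^ z) (Set.Icc a 1) := by
      intro x hx
      have hq : 0 < v * x + r₂ := by nlinarith [hx.1]
      exact ContinuousAt.continuousWithinAt
        (((by fun_prop : ContinuousAt (fun w : ℝ => v * w + r₂) x)).rpow_const (Or.inl hq.ne'))
    exact (c1.continuousOn.mul c2).mul continuousOn_const
  have hderiv : ∀ x ∈ Set.Ioo a 1, HasDerivWithinAt H (g x) (Set.Ioi x) x := by
    intro x hx
    have hp : 0 < u * x - r₁ := by
      have : u * a < u * x := (mul_lt_mul_iff_right₀ hu).2 hx.1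
      linarith [hua]
    have hq : 0 < v * x + r₂ := by nlinarith [ha0.le.trans hx.1.le]
    have d0 : HasDerivAt (fun w : ℝ => u * w - r₁) u x := by
      simpa using ((hasDerivAt_id x).const_mul u).sub_const r₁
    have d0' : HasDerivAt (fun w : ℝ => v * w + r₂) v x := by
      simpa using ((hasDerivAt_id x).const_mul v).add_const r₂
    have d1 : HasDerivAt (fun w : ℝ => (u * w - r₁) ^ (-z))
        (-z * (u * x - r₁) ^ (-z - 1) * u) x :=
      by have := (Real.hasDerivAt_rpow_const (p := -z) (Or.inl hp.ne')).comp x d0; exact this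
    have d2 : HasDerivAt (fun w : ℝ => (v * w + r₂) ^ z)
        (z * (v * x + r₂) ^ (z - 1) * v) x :=
      by have := (Real.hasDerivAt_rpow_const (p := z) (Or.inl hq.ne')).comp x d0'; exact this
    have dH : HasDerivAt H
        ((-z * (u * x - r₁) ^ (-z - 1) * u * (v * x + r₂) ^ z +
          (u * x - r₁) ^ (-z) * (z * (v * x + r₂) ^ (z - 1) * v)) * c) x :=
      (d1.mul d2).mul_const c
    have key : (-z * (u * x - r₁) ^ (-z - 1) * u * (v * x + r₂) ^ z +
          (u * x - r₁) ^ (-z) * (z * (v * x + r₂) ^ (z - 1) * v)) * c = g x := by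
      have ep : (u * x - r₁) ^ (-z) = (u * x - r₁) ^ (-z - 1) * (u * x - r₁) := by
        rw [← Real.rpow_add_one hp.ne', show (-z - 1 + 1) = -z by ring]
      have eq' : (v * x + r₂) ^ z = (v * x + r₂) ^ (z - 1) * (v * x + r₂) := by
        rw [← Real.rpow_add_one hq.ne', show (z - 1 + 1) = z by ring]
      rw [ep, eq', hg, hc]
      field_simp
      ring
    exact (key ▸ dH).hasDerivWithinAt
  have hFTC : ∫ w in a..1, g w = H 1 - H a :=
    intervalIntegral.integral_eq_sub_of_hasDeriv_right_of_le ha1.le hcontH hderiv hintg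
  have hHa : H a = 0 := by
    simp [hH, hua, Real.zero_rpow hnz.ne']
  -- assemble
  have step1 : ∫ w in Set.Ioo (0:ℝ) 1, F w = ∫ w in (0:ℝ)..1, F w := by
    rw [intervalIntegral.integral_of_le (by norm_num : (0:ℝ) ≤ 1),
      integral_Ioc_eq_integral_Ioo]
  have step2 : (∫ w in (0:ℝ)..a, F w) + ∫ w in a..1, F w = ∫ w in (0:ℝ)..1, F w :=
    intervalIntegral.integral_add_adjacent_intervals hintF0 hintF1
  have step3 : (∫ w in (0:ℝ)..a, F w) = 0 := by
    rw [intervalIntegral.integral_congr hF0]; simp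
  have step4 : (∫ w in a..1, F w) = ∫ w in a..1, g w :=
    intervalIntegral.integral_congr hFg
  calc ∫ w in Set.Ioo (0:ℝ) 1, F w = ∫ w in (0:ℝ)..1, F w := step1
    _ = (∫ w in (0:ℝ)..a, F w) + ∫ w in a..1, F w := step2.symm
    _ = ∫ w in a..1, g w := by rw [step3, step4]; ring
    _ = H 1 - H a := hFTC
    _ = (u - r₁) ^ (-z) * (v + r₂) ^ z * c := by
        rw [hHa, sub_zero]; simp only [hH, mul_one]
    _ = ((u - r₁) ^ (-z) / Real.Gamma (-z + 1)) * ((v + r₂) ^ z / Real.Gamma (z + 1)) *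
        (1 / (r₁ * v + r₂ * u)) := by
        have hGz : Real.Gamma (-z + 1) = -z * Real.Gamma (-z) :=
          Real.Gamma_add_one (by linarith : -z ≠ 0)
        rw [hGz, hc]
        rw [div_eq_mul_inv, div_eq_mul_inv, div_eq_mul_inv, div_eq_mul_inv]
        rw [mul_inv, mul_inv, mul_inv]
        ring
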